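/- Let f(z,w) = (p(z), q(z,w)) with p(z) = z^δ(1+ζ(z)) and q(z,w) = z^γ w^d (1+η(z,w)), where |ζ| < ε and |η| < ε on U = {|z| > R, |w| > R|z|^{l}} for some 0 < ε < 1/2. If d ≥ 2, l ≥ 0, and γ + l d ≥ l δ, then for all sufficiently large R, f(U) ⊆ U. -/

import Mathlib

open Set

noncomputable section

/-- The region `U_R = {(z,w) : |z| > R, |w| > R |z|^l}`. -/
def Ureg (l R : ℝ) : Set (ℂ × ℂ) :=
  {p | R < ‖p.1‖ ∧ R * ‖p.1‖ ^ l < ‖p.2‖}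

/-- If `p(z) = z^δ(1+ζ(z))`, `q(z,w) = z^γ w^d (1+η(z,w))` with `|ζ| < ε`, `|η| < ε`
on `U_{R₀}` for some `0 < ε < 1/2`, and `d ≥ 2`, `l ≥ 0`, `γ + l d ≥ l δ`, then for all
sufficiently large `R`, `f(U_R) ⊆ U_R`. -/
theorem stmt10 (δ d γ : ℕ) (hδ : 2 ≤ δ) (hd : 2 ≤ d)
    (l : ℝ) (hl : 0 ≤ l) (hld : l * (δ : ℝ) ≤ (γ : ℝ) + l * (d : ℝ))
    (ζ : ℂ → ℂ) (η : ℂ → ℂ → ℂ) (ε R₀ : ℝ)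
    (hε0 : 0 < ε) (hε : ε < 1/2) (hR₀ : 1 ≤ R₀)
    (hζ : ∀ p ∈ Ureg l R₀, ‖ζ p.1‖ < ε)
    (hη : ∀ p ∈ Ureg l R₀, ‖η p.1 p.2‖ < ε) :
    ∃ R₁, R₀ ≤ R₁ ∧ ∀ R, R₁ ≤ R → ∀ p ∈ Ureg l R,
      (p.1 ^ δ * (1 + ζ p.1), p.1 ^ γ * p.2 ^ d * (1 + η p.1 p.2)) ∈ Ureg l R := by
  refine ⟨max R₀ (max 2 (2 * (3/2 : ℝ) ^ l)), le_max_left _ _, ?_⟩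
  intro R hR p hp
  obtain ⟨hz, hw⟩ := hp
  set A := ‖p.1‖ with hA
  set B := ‖p.2‖ with hB
  have hR2 : (2:ℝ) ≤ R := le_trans (le_trans (le_max_left _ _) (le_max_right _ _)) hR
  have hR3 : 2 * (3/2:ℝ)^l ≤ R := le_trans (le_trans (le_max_right _ _) (le_max_right _ _)) hR
  have hR0R : R₀ ≤ R := le_trans (le_max_left _ _) hR
  have hA1 : 1 < A := lt_of_le_of_lt (by linarith) hz
  have hA0 : (0:ℝ) < A := by linarith
  have hAl0 : (0:ℝ) < A ^ l := Real.rpow_pos_of_pos hA0 l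
  have hAl1 : (1:ℝ) ≤ A ^ l := Real.one_le_rpow hA1.le hl
  have hB0 : (0:ℝ) < B := lt_trans (by positivity) hw
  have hpU0 : p ∈ Ureg l R₀ := by
    refine ⟨lt_of_le_of_lt hR0R hz, lt_of_le_of_lt ?_ hw⟩
    have := mul_le_mul_of_nonneg_right hR0R hAl0.le
    linarith
  have hζ' := hζ p hpU0
  have hη' := hη p hpU0
  -- bounds on |1+ζ| and |1+η|
  have hu1 : (1:ℝ) ≤ ‖1 + ζ p.1‖ + ‖ζ p.1‖ := by
    have h := norm_add_le (1 + ζ p.1) (-ζ p.1)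
    simpa using h
  have hu2 : ‖1 + ζ p.1‖ ≤ 1 + ‖ζ p.1‖ := by
    have h := norm_add_le 1 (ζ p.1)
    simpa using h
  have hv1 : (1:ℝ) ≤ ‖1 + η p.1 p.2‖ + ‖η p.1 p.2‖ := by
    have h := norm_add_le (1 + η p.1 p.2) (-η p.1 p.2)
    simpa using h
  set u := ‖1 + ζ p.1‖ with hu
  set v := ‖1 + η p.1 p.2‖ with hv
  have hu_lo : (1:ℝ)/2 < u := by linarith
  have hu_hi : u < 3/2 := by linarith
  have hv_lo : (1:ℝ)/2 < v := by linarith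
  constructor
  · -- first coordinate
    show R < ‖p.1 ^ δ * (1 + ζ p.1)‖
    rw [norm_mul, norm_pow]
    have h1 : A ^ 2 ≤ A ^ δ := pow_le_pow_right₀ hA1.le hδ
    have h2 : R ^ 2 < A ^ 2 := by nlinarith
    nlinarith [pow_pos hA0 δ]
  · -- second coordinate
    show R * ‖p.1 ^ δ * (1 + ζ p.1)‖ ^ l <
        ‖p.1 ^ γ * p.2 ^ d * (1 + η p.1 p.2)‖
    simp only [norm_mul, norm_pow]
    have hPl : (A ^ δ * u) ^ l = A ^ ((δ:ℝ) * l) * u ^ l := by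
      rw [Real.mul_rpow (by positivity) (by positivity), ← Real.rpow_natCast A δ,
        ← Real.rpow_mul hA0.le]
    rw [hPl]
    have hul : u ^ l ≤ (3/2:ℝ) ^ l := Real.rpow_le_rpow (by positivity) hu_hi.le hl
    -- lower bound for B^d
    have hBd : (R * A ^ l) ^ d ≤ B ^ d := pow_le_pow_left₀ (by positivity) hw.le d
    have hRAd : (R * A ^ l) ^ d = R ^ d * A ^ (l * (d:ℝ)) := by
      rw [mul_pow, ← Real.rpow_natCast (A ^ l) d, ← Real.rpow_mul hA0.le]
    have hAe : A ^ γ * A ^ (l * (d:ℝ)) = A ^ ((γ:ℝ) + l * (d:ℝ)) := by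
      rw [← Real.rpow_natCast A γ, ← Real.rpow_add hA0]
    have hexp : A ^ ((δ:ℝ) * l) ≤ A ^ ((γ:ℝ) + l * (d:ℝ)) := by
      apply Real.rpow_le_rpow_of_exponent_le hA1.le
      linarith [hld]
    -- R * (3/2)^l ≤ R^d / 2
    have hRd : 2 * (R * (3/2:ℝ)^l) ≤ R ^ d := by
      have h1 : R ≤ R ^ (d-1) := le_self_pow₀ (by linarith) (by omega)
      have h2 : R ^ d = R ^ (d-1) * R := by
        rw [← pow_succ]; congr 1; omega
      have h3 : 2 * (3/2:ℝ)^l * R ≤ R ^ (d-1) * R :=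
        mul_le_mul_of_nonneg_right (le_trans hR3 h1) (by linarith)
      rw [h2]; linarith
    have hp32 : (0:ℝ) < (3/2:ℝ)^l := by positivity
    have hAe0 : (0:ℝ) < A ^ ((γ:ℝ) + l * (d:ℝ)) := Real.rpow_pos_of_pos hA0 _
    have hAd0 : (0:ℝ) < A ^ ((δ:ℝ) * l) := Real.rpow_pos_of_pos hA0 _
    have hRd0 : (0:ℝ) < R ^ d := by positivity
    have hAg0 : (0:ℝ) < A ^ γ := by positivity
    have hRd2 : R * (3/2:ℝ)^l ≤ R ^ d / 2 := by linarith
    calc R * (A ^ ((δ:ℝ) * l) * u ^ l)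
        = R * A ^ ((δ:ℝ) * l) * u ^ l := by ring
      _ ≤ R * A ^ ((δ:ℝ) * l) * (3/2:ℝ)^l := by gcongr
      _ = R * (3/2:ℝ)^l * A ^ ((δ:ℝ) * l) := by ring
      _ ≤ R ^ d / 2 * A ^ ((δ:ℝ) * l) := by gcongr
      _ = R ^ d * A ^ ((δ:ℝ) * l) * (1/2) := by ring
      _ < R ^ d * A ^ ((δ:ℝ) * l) * v := by
          exact mul_lt_mul_of_pos_left hv_lo (by positivity)
      _ ≤ R ^ d * A ^ ((γ:ℝ) + l * (d:ℝ)) * v := by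
          gcongr
      _ = A ^ γ * (R ^ d * A ^ (l * (d:ℝ))) * v := by rw [← hAe]; ring
      _ ≤ A ^ γ * B ^ d * v := by
          gcongr
          exact le_trans (le_of_eq hRAd.symm) hBd
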